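/- Let R be a commutative ring, d ∈ ℕ, and let E be an R-module equipped with a locally nilpotent divided-power module structure, i.e. a family of R-linear endomorphisms u_I of E indexed by multi-indices I ∈ ℕ^d, with u_0 = id, u_I ∘ u_J = binom(I+J, I)·u_{I+J} for all I, J, and such that for every e ∈ E there is an N with u_I e = 0 whenever |I| ≥ N. Let P = R[X_1,…,X_d] be the polynomial ring, for each multi-index I let D_I : P → P be the R-linear divided-power (Hasse) derivative with D_I(X^J) = binom(J, I)·X^{J−I} if I ≤ J and D_I(X^J) = 0 otherwise, and on P ⊗_R E define for each multi-index I the operator θ_I := Σ_{K+K'=I} D_K ⊗ u_{K'}, and define the Casimir operator κ := Σ_I (−1)^{|I|}·(multiplication by X^I ⊗ 1) ∘ θ_I, which is a well-defined R-linear endomorphism of P ⊗_R E because the sum is pointwise finite. Then: (1) κ ∘ κ = κ; (2) the image of κ equals the common kernel ⋂_{I ≠ 0} ker θ_I ⊆ P ⊗_R E; (3) the map κ̄ : E → ⋂_{I ≠ 0} ker θ_I sending e to κ(1 ⊗ e) is an isomorphism of R-modules; (4) for every multi-index I one has (D_I ⊗ id_E) ∘ κ̄ = (−1)^{|I|}·κ̄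 ∘ u_I. -/

import Mathlib

open scoped TensorProduct BigOperators

namespace CasimirStmt

variable (R : Type*) [CommRing R] (d : ℕ)

/-- `multiBinom J I = ∏ₖ C(Jₖ, Iₖ)`, the multinomial binomial coefficient of two
multi-indices; it vanishes unless `I ≤ J`. -/
def multiBinom (J I : Fin d →₀ ℕ) : ℕ := ∏ k : Fin d, Nat.choose (J k) (I k)

/-- `|I| = Σₖ Iₖ`, the degree of the multi-index `I`. -/
def degOf (I : Fin d →₀ ℕ) : ℕ := I.sum fun _ n => n

/-- The divided-power (Hasse) derivative `D_I` on `R[X₁,…,X_d]`: the `R`-linear map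
with `D_I (X^J) = binom(J, I) • X^(J - I)`. -/
noncomputable def hasseDeriv (I : Fin d →₀ ℕ) :
    MvPolynomial (Fin d) R →ₗ[R] MvPolynomial (Fin d) R :=
  (MvPolynomial.basisMonomials (Fin d) R).constr R
    (fun J => (multiBinom d J I : R) • (MvPolynomial.monomial (J - I)) (1 : R))

variable (E : Type*) [AddCommGroup E] [Module R E]

/-- `θ_I = Σ_{K + K' = I} D_K ⊗ u_{K'}` acting on `R[X₁,…,X_d] ⊗_R E`. -/
noncomputable def theta (u : (Fin d →₀ ℕ) → E →ₗ[R] E) (I : Fin d →₀ ℕ) :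
    MvPolynomial (Fin d) R ⊗[R] E →ₗ[R] MvPolynomial (Fin d) R ⊗[R] E :=
  ∑ K ∈ Finset.HasAntidiagonal.antidiagonal I, TensorProduct.map (hasseDeriv R d K.1) (u K.2)

/-- The Casimir operator `κ = Σ_I (−1)^{|I|} · (X^I ·) ∘ θ_I` on `R[X₁,…,X_d] ⊗_R E`
(a pointwise finite sum, realized via `finsum`). -/
noncomputable def casimir (u : (Fin d →₀ ℕ) → E →ₗ[R] E) :
    MvPolynomial (Fin d) R ⊗[R] E → MvPolynomial (Fin d) R ⊗[R] E :=
  fun z => ∑ᶠ I : Fin d →₀ ℕ,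
    ((-1 : R) ^ degOf d I) •
      (TensorProduct.map (LinearMap.mulLeft R ((MvPolynomial.monomial I) (1 : R)))
        LinearMap.id) ((theta R d E u I) z)

/-- box finset -/
noncomputable def cut (N : ℕ) : Finset (Fin d →₀ ℕ) :=
  Finset.Iic (Finsupp.equivFunOnFinite.symm fun _ => N)


lemma mem_cut {N : ℕ} {I : Fin d →₀ ℕ} : I ∈ cut d N ↔ ∀ k, I k ≤ N := by
  simp only [cut, Finset.mem_Iic, Finsupp.le_def, Finsupp.coe_equivFunOnFinite_symm]

lemma degOf_eq (I : Fin d →₀ ℕ) : degOf d I = ∑ k, I k :=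
  Finsupp.sum_fintype _ _ (fun _ => rfl)

lemma apply_le_degOf (I : Fin d →₀ ℕ) (k : Fin d) : I k ≤ degOf d I := by
  rw [degOf_eq]; exact Finset.single_le_sum (fun _ _ => Nat.zero_le _) (Finset.mem_univ k)

lemma degOf_mono {I J : Fin d →₀ ℕ} (h : I ≤ J) : degOf d I ≤ degOf d J := by
  rw [degOf_eq, degOf_eq]; exact Finset.sum_le_sum fun k _ => h k

lemma lt_degOf_of_not_mem_cut {N : ℕ} {I : Fin d →₀ ℕ} (h : I ∉ cut d N) : N < degOf d I := by
  rw [mem_cut d] at h; push_neg at h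
  obtain ⟨k, hk⟩ := h
  exact lt_of_lt_of_le hk (apply_le_degOf d I k)

lemma mem_cut_of_degOf_le {N : ℕ} {I : Fin d →₀ ℕ} (h : degOf d I ≤ N) : I ∈ cut d N := by
  by_contra hc; exact absurd h (not_le.mpr (lt_degOf_of_not_mem_cut d hc))

lemma degOf_add (I J : Fin d →₀ ℕ) : degOf d (I + J) = degOf d I + degOf d J := by
  simp [degOf_eq, Finset.sum_add_distrib]

@[simp] lemma degOf_zero : degOf d (0 : Fin d →₀ ℕ) = 0 := by simp [degOf_eq]

lemma degOf_eq_zero_iff {I : Fin d →₀ ℕ} : degOf d I = 0 ↔ I = 0 := by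
  rw [degOf_eq]
  constructor
  · intro h
    ext k
    have := (Finset.sum_eq_zero_iff).mp h k (Finset.mem_univ k)
    simpa using this
  · rintro rfl; simp

@[simp] lemma multiBinom_zero_right (J : Fin d →₀ ℕ) : multiBinom d J 0 = 1 := by
  simp [multiBinom]

lemma multiBinom_eq_zero {J K : Fin d →₀ ℕ} (h : ¬ K ≤ J) : multiBinom d J K = 0 := by
  rw [Finsupp.le_def] at h; push_neg at h
  obtain ⟨k, hk⟩ := h
  exact Finset.prod_eq_zero (Finset.mem_univ k) (Nat.choose_eq_zero_of_lt hk)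

lemma multiBinom_symm (I B : Fin d →₀ ℕ) : multiBinom d (I + B) I = multiBinom d (I + B) B := by
  unfold multiBinom
  refine Finset.prod_congr rfl fun k _ => ?_
  rw [Finsupp.add_apply]
  exact Nat.choose_symm_add

open Nat in
lemma trinom (b k k' : ℕ) :
    (b + k).choose k * (k + k' + b).choose k' = (k + k' + b).choose b * (k + k').choose k := by
  have h1 : (b + k).choose k * k ! * b ! = (b + k)! := by
    have := Nat.choose_mul_factorial_mul_factorial (show k ≤ b + k by omega)
    simpa using this
  have h2 : (k + k' + b).choose k' * k' ! * (b + k)! = (k + k' + b)! := by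
    have := Nat.choose_mul_factorial_mul_factorial (show k' ≤ k + k' + b by omega)
    have e : k + k' + b - k' = b + k := by omega
    rwa [e] at this
  have h3 : (k + k' + b).choose b * b ! * (k + k')! = (k + k' + b)! := by
    have := Nat.choose_mul_factorial_mul_factorial (show b ≤ k + k' + b by omega)
    have e : k + k' + b - b = k + k' := by omega
    rwa [e] at this
  have h4 : (k + k').choose k * k ! * k' ! = (k + k')! := by
    have := Nat.choose_mul_factorial_mul_factorial (show k ≤ k + k' by omega)
    have e : k + k' - k = k' := by omega
    rwa [e] at this
  have key : ((b + k).choose k * (k + k' + b).choose k') * (k ! * k' ! * b !)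
      = ((k + k' + b).choose b * (k + k').choose k) * (k ! * k' ! * b !) := by
    calc ((b + k).choose k * (k + k' + b).choose k') * (k ! * k' ! * b !)
        = ((k + k' + b).choose k' * k' !) * ((b + k).choose k * k ! * b !) := by ring
      _ = ((k + k' + b).choose k' * k' !) * (b + k)! := by rw [h1]
      _ = (k + k' + b)! := by rw [← h2]
      _ = ((k + k' + b).choose b * b !) * (k + k')! := by rw [← h3]
      _ = ((k + k' + b).choose b * b !) * ((k + k').choose k * k ! * k' !) := by rw [h4]
      _ = ((k + k' + b).choose b * (k + k').choose k) * (k ! * k' ! * b !) := by ring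
  exact Nat.eq_of_mul_eq_mul_right (by positivity) key

lemma multi_trinom {K K' : Fin d →₀ ℕ} (B : Fin d →₀ ℕ) :
    multiBinom d (K + B) K * multiBinom d (K + K' + B) K'
      = multiBinom d (K + K' + B) B * multiBinom d (K + K') K := by
  unfold multiBinom
  rw [← Finset.prod_mul_distrib, ← Finset.prod_mul_distrib]
  refine Finset.prod_congr rfl fun x _ => ?_
  simp only [Finsupp.add_apply]
  rw [show K x + B x = B x + K x by omega]
  exact trinom (B x) (K x) (K' x)


lemma alt_sum_one (n : ℕ) (hn : n ≠ 0) :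
    ∑ i ∈ Finset.range (n + 1), (-1 : R) ^ i * (n.choose i : R) = 0 := by
  have h := Int.alternating_sum_range_choose_of_ne hn
  calc ∑ i ∈ Finset.range (n + 1), (-1 : R) ^ i * (n.choose i : R)
      = ((∑ m ∈ Finset.range (n + 1), (-1 : ℤ) ^ m * (n.choose m : ℤ) : ℤ) : R) := by
        push_cast; rfl
    _ = 0 := by rw [h]; exact Int.cast_zero

lemma Iic_zero : Finset.Iic (0 : Fin d →₀ ℕ) = {0} := by
  ext K; simp [Finset.mem_Iic, le_zero_iff]

lemma degOf_single (a : Fin d) (i : ℕ) : degOf d (Finsupp.single a i) = i := by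
  rw [degOf_eq]
  simp [Finsupp.single_apply]

lemma alt_sum (J : Fin d →₀ ℕ) :
    ∑ K ∈ Finset.Iic J, (-1 : R) ^ degOf d K * (multiBinom d J K : R)
      = if J = 0 then 1 else 0 := by
  induction J using Finsupp.induction with
  | zero => simp [Iic_zero]
  | single_add a n f haf hn ih =>
    have hfa : f a = 0 := Finsupp.notMem_support_iff.mp haf
    set J : Fin d →₀ ℕ := Finsupp.single a n + f with hJ
    have hJa : J a = n := by simp [hJ, Finsupp.add_apply, Finsupp.single_apply, hfa]
    have hJx : ∀ x, x ≠ a → J x = f x := by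
      intro x hx
      simp [hJ, Finsupp.add_apply, Finsupp.single_apply, Ne.symm hx]
    have hJ0 : J ≠ 0 := by
      intro h0
      apply hn
      have := congrArg (fun g : Fin d →₀ ℕ => g a) h0
      simpa [hJa] using this
    rw [if_neg hJ0]
    have key : ∑ K ∈ Finset.Iic J, (-1 : R) ^ degOf d K * (multiBinom d J K : R)
        = ∑ p ∈ Finset.range (n + 1) ×ˢ Finset.Iic f,
            ((-1 : R) ^ p.1 * (n.choose p.1 : R))
              * ((-1 : R) ^ degOf d p.2 * (multiBinom d f p.2 : R)) := by
      refine Finset.sum_nbij' (fun K => (K a, K.erase a))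
        (fun p => Finsupp.single a p.1 + p.2) ?_ ?_ ?_ ?_ ?_
      · intro K hK
        rw [Finset.mem_Iic] at hK
        rw [Finset.mem_product, Finset.mem_range, Finset.mem_Iic]
        constructor
        · have := hK a; rw [hJa] at this; omega
        · intro x
          by_cases hx : x = a
          · subst hx; simp [Finsupp.erase_apply]
          · have := hK x
            rw [hJx x hx] at this
            simpa [Finsupp.erase_apply, hx] using this
      · intro p hp
        rw [Finset.mem_product, Finset.mem_range, Finset.mem_Iic] at hp
        rw [Finset.mem_Iic]
        intro x
        by_cases hx : x = a
        · subst hx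
          have h2 : p.2 x ≤ f x := hp.2 x
          simp only [Finsupp.add_apply, Finsupp.single_apply, eq_self_iff_true, if_true, hJa]
          omega
        · have h2 := hp.2 x
          simp only [Finsupp.add_apply, Finsupp.single_apply, if_neg (Ne.symm hx),
            zero_add, hJx x hx]
          exact h2
      · intro K _
        dsimp only
        exact Finsupp.single_add_erase a K
      · intro p hp
        rw [Finset.mem_product, Finset.mem_range, Finset.mem_Iic] at hp
        have hp2a : p.2 a = 0 := by
          have := hp.2 a; rw [hfa] at this; omega
        have h1 : ((Finsupp.single a p.1 + p.2) : Fin d →₀ ℕ) a = p.1 := by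
          simp [Finsupp.add_apply, Finsupp.single_apply, hp2a]
        have h2 : Finsupp.erase a (Finsupp.single a p.1 + p.2) = p.2 := by
          rw [Finsupp.erase_add, Finsupp.erase_single, zero_add,
            Finsupp.erase_of_notMem_support (Finsupp.notMem_support_iff.mpr hp2a)]
        rw [h1, h2]
      · intro K hK
        dsimp only
        rw [Finset.mem_Iic] at hK
        have hKdeg : degOf d K = K a + degOf d (K.erase a) := by
          conv_lhs => rw [← Finsupp.single_add_erase a K]
          rw [degOf_add, degOf_single]
        have h1 : multiBinom d J K
            = (J a).choose (K a) * ∏ x ∈ Finset.univ.erase a, (J x).choose (K x) :=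
          (Finset.mul_prod_erase Finset.univ (fun x => (J x).choose (K x))
            (Finset.mem_univ a)).symm
        have h2 : multiBinom d f (K.erase a)
            = (f a).choose ((K.erase a) a)
              * ∏ x ∈ Finset.univ.erase a, (f x).choose ((K.erase a) x) :=
          (Finset.mul_prod_erase Finset.univ (fun x => (f x).choose ((K.erase a) x))
            (Finset.mem_univ a)).symm
        have h3 : multiBinom d f (K.erase a)
            = ∏ x ∈ Finset.univ.erase a, (J x).choose (K x) := by
          rw [h2]
          have hea : (K.erase a) a = 0 := by simp [Finsupp.erase_apply]
          rw [hea, Nat.choose_zero_right, one_mul]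
          refine Finset.prod_congr rfl fun x hx => ?_
          have hxa : x ≠ a := (Finset.mem_erase.mp hx).1
          rw [Finsupp.erase_apply, if_neg hxa, hJx x hxa]
        have hbin : multiBinom d J K = n.choose (K a) * multiBinom d f (K.erase a) := by
          rw [h1, h3, hJa]
        rw [hKdeg, hbin, pow_add]
        push_cast
        ring
    rw [key, Finset.sum_product]
    dsimp only
    rw [← Finset.sum_mul_sum, alt_sum_one R n hn, zero_mul]


lemma hasseDeriv_monomial_one (I J : Fin d →₀ ℕ) :
    hasseDeriv R d I (MvPolynomial.monomial J (1 : R))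
      = (multiBinom d J I : R) • MvPolynomial.monomial (J - I) (1 : R) := by
  have hb : (MvPolynomial.basisMonomials (Fin d) R) J = MvPolynomial.monomial J (1 : R) := by
    rw [MvPolynomial.coe_basisMonomials]
  rw [hasseDeriv, ← hb, Module.Basis.constr_basis]

lemma hasseDeriv_monomial (I J : Fin d →₀ ℕ) (c : R) :
    hasseDeriv R d I (MvPolynomial.monomial J c)
      = (multiBinom d J I : R) • MvPolynomial.monomial (J - I) c := by
  have hc : MvPolynomial.monomial J c = c • MvPolynomial.monomial J (1 : R) := by
    rw [MvPolynomial.smul_monomial, smul_eq_mul, mul_one]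
  rw [hc, map_smul, hasseDeriv_monomial_one, smul_comm c ((multiBinom d J I : R)),
    MvPolynomial.smul_monomial, smul_eq_mul, mul_one]

lemma hasseDeriv_zero' : hasseDeriv R d 0 = LinearMap.id := by
  refine Module.Basis.ext (MvPolynomial.basisMonomials (Fin d) R) fun J => ?_
  have hb : (MvPolynomial.basisMonomials (Fin d) R) J = MvPolynomial.monomial J (1 : R) := by
    rw [MvPolynomial.coe_basisMonomials]
  rw [hb, hasseDeriv_monomial_one]
  simp

lemma theta_tmul (u : (Fin d →₀ ℕ) → E →ₗ[R] E) (I J : Fin d →₀ ℕ) (c : R) (e : E) :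
    theta R d E u I (MvPolynomial.monomial J c ⊗ₜ[R] e)
      = ∑ p ∈ Finset.HasAntidiagonal.antidiagonal I,
          (multiBinom d J p.1 : R) • (MvPolynomial.monomial (J - p.1) c ⊗ₜ[R] u p.2 e) := by
  rw [theta, LinearMap.sum_apply]
  refine Finset.sum_congr rfl fun p _ => ?_
  rw [TensorProduct.map_tmul, hasseDeriv_monomial, TensorProduct.smul_tmul']

lemma theta_zero_eq (u : (Fin d →₀ ℕ) → E →ₗ[R] E) (hu0 : u 0 = LinearMap.id) :
    theta R d E u 0 = LinearMap.id := by
  rw [theta, Finsupp.antidiagonal_zero, Finset.sum_singleton, hu0, hasseDeriv_zero',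
    TensorProduct.map_id]

lemma theta_bound (u : (Fin d →₀ ℕ) → E →ₗ[R] E)
    (hnil : ∀ e : E, ∃ N : ℕ, ∀ I : Fin d →₀ ℕ, N ≤ degOf d I → u I e = 0)
    (z : MvPolynomial (Fin d) R ⊗[R] E) :
    ∃ N : ℕ, ∀ I : Fin d →₀ ℕ, N ≤ degOf d I → theta R d E u I z = 0 := by
  induction z using TensorProduct.induction_on with
  | zero => exact ⟨0, fun I _ => map_zero _⟩
  | add x y hx hy =>
    obtain ⟨Nx, hNx⟩ := hx
    obtain ⟨Ny, hNy⟩ := hy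
    exact ⟨max Nx Ny, fun I hI => by
      rw [map_add, hNx I (le_trans (le_max_left _ _) hI),
        hNy I (le_trans (le_max_right _ _) hI), add_zero]⟩
  | tmul p e =>
    induction p using MvPolynomial.induction_on' with
    | add p q hp hq =>
      obtain ⟨Np, hNp⟩ := hp
      obtain ⟨Nq, hNq⟩ := hq
      refine ⟨max Np Nq, fun I hI => ?_⟩
      rw [TensorProduct.add_tmul, map_add, hNp I (le_trans (le_max_left _ _) hI),
        hNq I (le_trans (le_max_right _ _) hI), add_zero]
    | monomial J c =>
      obtain ⟨Ne, hNe⟩ := hnil e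
      refine ⟨degOf d J + Ne, fun I hI => ?_⟩
      rw [theta_tmul]
      refine Finset.sum_eq_zero fun p hp => ?_
      rw [Finset.HasAntidiagonal.mem_antidiagonal] at hp
      by_cases hle : p.1 ≤ J
      · have h1 : degOf d p.1 ≤ degOf d J := degOf_mono d hle
        have h2 : degOf d p.1 + degOf d p.2 = degOf d I := by rw [← degOf_add, hp]
        have h3 : Ne ≤ degOf d p.2 := by omega
        rw [hNe p.2 h3, TensorProduct.tmul_zero, smul_zero]
      · rw [multiBinom_eq_zero d hle, Nat.cast_zero, zero_smul]

lemma casimir_eq_sum (u : (Fin d →₀ ℕ) → E →ₗ[R] E) {z : MvPolynomial (Fin d) R ⊗[R] E}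
    {N : ℕ} (hN : ∀ I, N ≤ degOf d I → theta R d E u I z = 0) :
    casimir R d E u z = ∑ I ∈ cut d N,
      ((-1 : R) ^ degOf d I) •
        (TensorProduct.map (LinearMap.mulLeft R ((MvPolynomial.monomial I) (1 : R)))
          LinearMap.id) ((theta R d E u I) z) := by
  rw [casimir]
  refine finsum_eq_sum_of_support_subset _ fun I hI => ?_
  rw [Function.mem_support] at hI
  by_contra hc
  exact hI (by rw [hN I (le_of_lt (lt_degOf_of_not_mem_cut d hc)), map_zero, smul_zero])

lemma casimir_add (u : (Fin d →₀ ℕ) → E →ₗ[R] E)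
    (hnil : ∀ e : E, ∃ N : ℕ, ∀ I : Fin d →₀ ℕ, N ≤ degOf d I → u I e = 0)
    (z w : MvPolynomial (Fin d) R ⊗[R] E) :
    casimir R d E u (z + w) = casimir R d E u z + casimir R d E u w := by
  obtain ⟨Nz, hNz⟩ := theta_bound R d E u hnil z
  obtain ⟨Nw, hNw⟩ := theta_bound R d E u hnil w
  have hz : ∀ I, max Nz Nw ≤ degOf d I → theta R d E u I z = 0 :=
    fun I hI => hNz I (le_trans (le_max_left _ _) hI)
  have hw : ∀ I, max Nz Nw ≤ degOf d I → theta R d E u I w = 0 :=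
    fun I hI => hNw I (le_trans (le_max_right _ _) hI)
  have hzw : ∀ I, max Nz Nw ≤ degOf d I → theta R d E u I (z + w) = 0 :=
    fun I hI => by rw [map_add, hz I hI, hw I hI, add_zero]
  rw [casimir_eq_sum R d E u hzw, casimir_eq_sum R d E u hz, casimir_eq_sum R d E u hw,
    ← Finset.sum_add_distrib]
  refine Finset.sum_congr rfl fun I _ => ?_
  rw [map_add, map_add, smul_add]

lemma casimir_smul (u : (Fin d →₀ ℕ) → E →ₗ[R] E)
    (hnil : ∀ e : E, ∃ N : ℕ, ∀ I : Fin d →₀ ℕ, N ≤ degOf d I → u I e = 0)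
    (r : R) (z : MvPolynomial (Fin d) R ⊗[R] E) :
    casimir R d E u (r • z) = r • casimir R d E u z := by
  obtain ⟨Nz, hNz⟩ := theta_bound R d E u hnil z
  have hz : ∀ I, Nz ≤ degOf d I → theta R d E u I (r • z) = 0 :=
    fun I hI => by rw [map_smul, hNz I hI, smul_zero]
  rw [casimir_eq_sum R d E u hz, casimir_eq_sum R d E u hNz, Finset.smul_sum]
  refine Finset.sum_congr rfl fun I _ => ?_
  rw [map_smul, map_smul, smul_comm]

lemma finsum_shift d {α : Type*} [AddCommMonoid α] (K : Fin d →₀ ℕ)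
    (f : (Fin d →₀ ℕ) → α) (h0 : ∀ I, ¬ K ≤ I → f I = 0) :
    ∑ᶠ I, f I = ∑ᶠ B, f (K + B) := by
  have hinj : Function.Injective (fun B : Fin d →₀ ℕ => K + B) :=
    fun x y h => by simpa using h
  rw [← finsum_mem_range (f := f) hinj, ← finsum_mem_univ f]
  refine finsum_mem_inter_support_eq' f _ _ fun x hx => ?_
  rw [Function.mem_support] at hx
  simp only [Set.mem_univ, Set.mem_range, true_iff]
  have hle : K ≤ x := by
    by_contra hc
    exact hx (h0 x hc)
  obtain ⟨c, hc⟩ := le_iff_exists_add.mp hle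
  exact ⟨c, hc.symm⟩


noncomputable def eps : MvPolynomial (Fin d) R ⊗[R] E →ₗ[R] E :=
  TensorProduct.lift ((LinearMap.lsmul R E).comp
    (MvPolynomial.aeval (fun _ : Fin d => (0 : R))).toLinearMap)

lemma eps_tmul (p : MvPolynomial (Fin d) R) (e : E) :
    eps R d E (p ⊗ₜ[R] e) = (MvPolynomial.aeval (fun _ : Fin d => (0 : R))) p • e := by
  simp [eps]

lemma aeval_zero_monomial (J : Fin d →₀ ℕ) (c : R) :
    (MvPolynomial.aeval (fun _ : Fin d => (0 : R))) (MvPolynomial.monomial J c)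
      = if J = 0 then c else 0 := by
  rw [MvPolynomial.aeval_monomial]
  by_cases hJ : J = 0
  · subst hJ; simp
  · rw [if_neg hJ]
    have : ∃ k, J k ≠ 0 := by
      by_contra hc
      push_neg at hc
      exact hJ (Finsupp.ext fun k => hc k)
    obtain ⟨k, hk⟩ := this
    have hmem : k ∈ J.support := Finsupp.mem_support_iff.mpr hk
    rw [Finsupp.prod, Finset.prod_eq_zero hmem (by rw [zero_pow hk]), mul_zero]

lemma eps_tmul_monomial (J : Fin d →₀ ℕ) (c : R) (e : E) :
    eps R d E (MvPolynomial.monomial J c ⊗ₜ[R] e) = if J = 0 then c • e else 0 := by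
  rw [eps_tmul, aeval_zero_monomial]
  by_cases hJ : J = 0 <;> simp [hJ]

noncomputable def kbar (u : (Fin d →₀ ℕ) → E →ₗ[R] E) (e : E) :
    MvPolynomial (Fin d) R ⊗[R] E :=
  ∑ᶠ I : Fin d →₀ ℕ,
    ((-1 : R) ^ degOf d I) • (MvPolynomial.monomial I (1 : R) ⊗ₜ[R] u I e)

lemma kbar_eq_sum (u : (Fin d →₀ ℕ) → E →ₗ[R] E) {e : E} {N : ℕ}
    (hN : ∀ I, N ≤ degOf d I → u I e = 0) :
    kbar R d E u e = ∑ I ∈ cut d N,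
      ((-1 : R) ^ degOf d I) • (MvPolynomial.monomial I (1 : R) ⊗ₜ[R] u I e) := by
  refine finsum_eq_sum_of_support_subset _ fun I hI => ?_
  rw [Function.mem_support] at hI
  by_contra hc
  exact hI (by rw [hN I (le_of_lt (lt_degOf_of_not_mem_cut d hc)),
    TensorProduct.tmul_zero, smul_zero])

lemma kbar_zero (u : (Fin d →₀ ℕ) → E →ₗ[R] E) : kbar R d E u (0 : E) = 0 := by
  have h : ∀ I, (0 : ℕ) ≤ degOf d I → u I (0 : E) = 0 := fun I _ => map_zero _
  rw [kbar_eq_sum R d E u h]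
  refine Finset.sum_eq_zero fun I _ => ?_
  rw [map_zero, TensorProduct.tmul_zero, smul_zero]

lemma kbar_add (u : (Fin d →₀ ℕ) → E →ₗ[R] E)
    (hnil : ∀ e : E, ∃ N : ℕ, ∀ I : Fin d →₀ ℕ, N ≤ degOf d I → u I e = 0)
    (e e' : E) : kbar R d E u (e + e') = kbar R d E u e + kbar R d E u e' := by
  obtain ⟨N1, hN1⟩ := hnil e
  obtain ⟨N2, hN2⟩ := hnil e'
  have h1 : ∀ I, max N1 N2 ≤ degOf d I → u I e = 0 :=
    fun I hI => hN1 I (le_trans (le_max_left _ _) hI)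
  have h2 : ∀ I, max N1 N2 ≤ degOf d I → u I e' = 0 :=
    fun I hI => hN2 I (le_trans (le_max_right _ _) hI)
  have h3 : ∀ I, max N1 N2 ≤ degOf d I → u I (e + e') = 0 :=
    fun I hI => by rw [map_add, h1 I hI, h2 I hI, add_zero]
  rw [kbar_eq_sum R d E u h3, kbar_eq_sum R d E u h1, kbar_eq_sum R d E u h2,
    ← Finset.sum_add_distrib]
  refine Finset.sum_congr rfl fun I _ => ?_
  rw [map_add, TensorProduct.tmul_add, smul_add]

lemma kbar_smul (u : (Fin d →₀ ℕ) → E →ₗ[R] E)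
    (hnil : ∀ e : E, ∃ N : ℕ, ∀ I : Fin d →₀ ℕ, N ≤ degOf d I → u I e = 0)
    (r : R) (e : E) : kbar R d E u (r • e) = r • kbar R d E u e := by
  obtain ⟨N1, hN1⟩ := hnil e
  have h1 : ∀ I, N1 ≤ degOf d I → u I (r • e) = 0 :=
    fun I hI => by rw [map_smul, hN1 I hI, smul_zero]
  rw [kbar_eq_sum R d E u h1, kbar_eq_sum R d E u hN1, Finset.smul_sum]
  refine Finset.sum_congr rfl fun I _ => ?_
  rw [map_smul, TensorProduct.tmul_smul, smul_comm]

lemma eps_kbar (u : (Fin d →₀ ℕ) → E →ₗ[R] E) (hu0 : u 0 = LinearMap.id)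
    (hnil : ∀ e : E, ∃ N : ℕ, ∀ I : Fin d →₀ ℕ, N ≤ degOf d I → u I e = 0)
    (e : E) : eps R d E (kbar R d E u e) = e := by
  obtain ⟨Ne, hNe⟩ := hnil e
  rw [kbar_eq_sum R d E u hNe, map_sum]
  rw [Finset.sum_eq_single (0 : Fin d →₀ ℕ)]
  · rw [map_smul, eps_tmul_monomial, if_pos rfl, hu0]
    simp
  · intro I _ hI
    rw [map_smul, eps_tmul_monomial, if_neg hI, smul_zero]
  · intro h
    exact absurd ((mem_cut d).mpr fun k => Nat.zero_le _) h


lemma theta_monomial_bound (u : (Fin d →₀ ℕ) → E →ₗ[R] E) {e : E} {Ne : ℕ}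
    (hNe : ∀ I, Ne ≤ degOf d I → u I e = 0) (J : Fin d →₀ ℕ) (c : R) :
    ∀ I, degOf d J + Ne ≤ degOf d I →
      theta R d E u I (MvPolynomial.monomial J c ⊗ₜ[R] e) = 0 := by
  intro I hI
  rw [theta_tmul]
  refine Finset.sum_eq_zero fun p hp => ?_
  rw [Finset.HasAntidiagonal.mem_antidiagonal] at hp
  by_cases hle : p.1 ≤ J
  · have h1 : degOf d p.1 ≤ degOf d J := degOf_mono d hle
    have h2 : degOf d p.1 + degOf d p.2 = degOf d I := by rw [← degOf_add, hp]
    have h3 : Ne ≤ degOf d p.2 := by omega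
    rw [hNe p.2 h3, TensorProduct.tmul_zero, smul_zero]
  · rw [multiBinom_eq_zero d hle, Nat.cast_zero, zero_smul]

lemma sum_antidiagonal_fst {α : Type*} [AddCommMonoid α] (J : Fin d →₀ ℕ)
    (f : (Fin d →₀ ℕ) → α) :
    ∑ p ∈ Finset.HasAntidiagonal.antidiagonal J, f p.1 = ∑ K ∈ Finset.Iic J, f K := by
  refine Finset.sum_nbij' (fun p => p.1) (fun K => (K, J - K)) ?_ ?_ ?_ ?_ ?_
  · intro p hp
    rw [Finset.HasAntidiagonal.mem_antidiagonal] at hp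
    rw [Finset.mem_Iic, ← hp]
    exact self_le_add_right _ _
  · intro K hK
    rw [Finset.mem_Iic] at hK
    rw [Finset.HasAntidiagonal.mem_antidiagonal]
    exact add_tsub_cancel_of_le hK
  · intro p hp
    rw [Finset.HasAntidiagonal.mem_antidiagonal] at hp
    have h2 : J - p.1 = p.2 := by rw [← hp, add_tsub_cancel_left]
    exact Prod.ext rfl h2
  · intro K _
    rfl
  · intro p _
    rfl

set_option maxHeartbeats 1000000 in
lemma casimir_tmul_monomial (u : (Fin d →₀ ℕ) → E →ₗ[R] E)
    (hnil : ∀ e : E, ∃ N : ℕ, ∀ I : Fin d →₀ ℕ, N ≤ degOf d I → u I e = 0)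
    (J : Fin d →₀ ℕ) (c : R) (e : E) :
    casimir R d E u (MvPolynomial.monomial J c ⊗ₜ[R] e)
      = if J = 0 then c • kbar R d E u e else 0 := by
  obtain ⟨Ne, hNe⟩ := hnil e
  set N : ℕ := degOf d J + Ne with hNdef
  have hbd := theta_monomial_bound R d E u hNe J c
  set g : (Fin d →₀ ℕ) × (Fin d →₀ ℕ) → MvPolynomial (Fin d) R ⊗[R] E := fun p =>
    ((-1 : R) ^ degOf d p.1 * (-1 : R) ^ degOf d p.2 * (multiBinom d J p.1 : R)) •
      ((MvPolynomial.monomial (p.1 + p.2) (1 : R) * MvPolynomial.monomial (J - p.1) c)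
        ⊗ₜ[R] u p.2 e) with hgdef
  have hA : ∀ I ∈ cut d N,
      ((-1 : R) ^ degOf d I) •
        (TensorProduct.map (LinearMap.mulLeft R ((MvPolynomial.monomial I) (1 : R)))
          LinearMap.id) ((theta R d E u I) (MvPolynomial.monomial J c ⊗ₜ[R] e))
      = ∑ p ∈ Finset.HasAntidiagonal.antidiagonal I, g p := by
    intro I _
    rw [theta_tmul, map_sum, Finset.smul_sum]
    refine Finset.sum_congr rfl fun p hp => ?_
    rw [Finset.HasAntidiagonal.mem_antidiagonal] at hp
    rw [map_smul, TensorProduct.map_tmul, LinearMap.mulLeft_apply, LinearMap.id_apply,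
      smul_smul, hgdef]
    dsimp only
    rw [← hp, degOf_add, pow_add]
  rw [casimir_eq_sum R d E u hbd, Finset.sum_congr rfl hA]
  have hdisj : (↑(cut d N) : Set (Fin d →₀ ℕ)).PairwiseDisjoint Finset.HasAntidiagonal.antidiagonal := by
    intro I _ I' _ hne
    show Disjoint (Finset.HasAntidiagonal.antidiagonal I) (Finset.HasAntidiagonal.antidiagonal I')
    rw [Finset.disjoint_left]
    intro p hp hp'
    rw [Finset.HasAntidiagonal.mem_antidiagonal] at hp hp'
    exact hne (by rw [← hp, hp'])
  rw [← Finset.sum_biUnion hdisj]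
  have hsub : (cut d N).biUnion Finset.HasAntidiagonal.antidiagonal ⊆ cut d N ×ˢ cut d N := by
    intro p hp
    rw [Finset.mem_biUnion] at hp
    obtain ⟨I, hI, hpI⟩ := hp
    rw [Finset.HasAntidiagonal.mem_antidiagonal] at hpI
    have hI' := (mem_cut d).mp hI
    rw [Finset.mem_product, mem_cut d, mem_cut d]
    constructor
    · intro k
      refine le_trans ?_ (hI' k)
      rw [← hpI, Finsupp.add_apply]
      omega
    · intro k
      refine le_trans ?_ (hI' k)
      rw [← hpI, Finsupp.add_apply]
      omega
  have hzero : ∀ p ∈ cut d N ×ˢ cut d N,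
      p ∉ (cut d N).biUnion Finset.HasAntidiagonal.antidiagonal → g p = 0 := by
    intro p _ hp
    have hsum : p.1 + p.2 ∉ cut d N := by
      intro hcontra
      exact hp (Finset.mem_biUnion.mpr ⟨p.1 + p.2, hcontra, Finset.HasAntidiagonal.mem_antidiagonal.mpr rfl⟩)
    by_cases hle : p.1 ≤ J
    · have hvan : u p.2 e = 0 := by
        rw [mem_cut d] at hsum
        push_neg at hsum
        obtain ⟨k, hk⟩ := hsum
        rw [Finsupp.add_apply] at hk
        have h1 : p.1 k ≤ degOf d J := le_trans (hle k) (apply_le_degOf d J k)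
        have h2 : Ne < p.2 k := by omega
        exact hNe p.2 (le_trans (Nat.le_of_lt h2) (apply_le_degOf d p.2 k))
      rw [hgdef]
      dsimp only
      rw [hvan, TensorProduct.tmul_zero, smul_zero]
    · rw [hgdef]
      dsimp only
      rw [multiBinom_eq_zero d hle, Nat.cast_zero, mul_zero, zero_smul]
  rw [Finset.sum_subset hsub hzero, Finset.sum_product]
  have hfact : ∀ K ∈ cut d N, ∀ K' ∈ cut d N,
      g (K, K') = ((-1 : R) ^ degOf d K * (multiBinom d J K : R)) •
        (((-1 : R) ^ degOf d K') •
          (MvPolynomial.monomial (J + K') c ⊗ₜ[R] u K' e)) := by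
    intro K _ K' _
    by_cases hle : K ≤ J
    · have hexp : K + K' + (J - K) = J + K' := by
        ext k
        simp only [Finsupp.add_apply, Finsupp.tsub_apply]
        have := hle k
        omega
      rw [hgdef]
      dsimp only
      rw [MvPolynomial.monomial_mul, one_mul, hexp, smul_smul]
      congr 1
      ring
    · rw [hgdef]
      dsimp only
      rw [multiBinom_eq_zero d hle, Nat.cast_zero, mul_zero, zero_smul, mul_zero, zero_smul]
  calc ∑ K ∈ cut d N, ∑ K' ∈ cut d N, g (K, K')
      = ∑ K ∈ cut d N, ((-1 : R) ^ degOf d K * (multiBinom d J K : R)) •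
          (∑ K' ∈ cut d N, ((-1 : R) ^ degOf d K') •
            (MvPolynomial.monomial (J + K') c ⊗ₜ[R] u K' e)) := by
        refine Finset.sum_congr rfl fun K hK => ?_
        rw [Finset.smul_sum]
        exact Finset.sum_congr rfl fun K' hK' => hfact K hK K' hK'
    _ = (∑ K ∈ cut d N, (-1 : R) ^ degOf d K * (multiBinom d J K : R)) •
          (∑ K' ∈ cut d N, ((-1 : R) ^ degOf d K') •
            (MvPolynomial.monomial (J + K') c ⊗ₜ[R] u K' e)) := by
        rw [Finset.sum_smul]
    _ = (if J = 0 then (1 : R) else 0) •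
          (∑ K' ∈ cut d N, ((-1 : R) ^ degOf d K') •
            (MvPolynomial.monomial (J + K') c ⊗ₜ[R] u K' e)) := by
        have halt : (∑ K ∈ cut d N, (-1 : R) ^ degOf d K * (multiBinom d J K : R))
            = if J = 0 then 1 else 0 := by
          rw [← alt_sum R d J]
          refine (Finset.sum_subset ?_ ?_).symm
          · intro K hK
            rw [Finset.mem_Iic] at hK
            rw [mem_cut d]
            intro k
            exact le_trans (le_trans (hK k) (apply_le_degOf d J k)) (by omega)
          · intro K _ hK
            rw [Finset.mem_Iic] at hK
            rw [multiBinom_eq_zero d hK, Nat.cast_zero, mul_zero]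
        rw [halt]
    _ = if J = 0 then c • kbar R d E u e else 0 := by
        by_cases hJ : J = 0
        · subst hJ
          rw [if_pos rfl, if_pos rfl, one_smul]
          have hNe' : ∀ I, N ≤ degOf d I → u I e = 0 := fun I hI =>
            hNe I (le_trans (by omega) hI)
          rw [kbar_eq_sum R d E u hNe', Finset.smul_sum]
          refine Finset.sum_congr rfl fun K' _ => ?_
          have h1 : c • (MvPolynomial.monomial K' (1 : R) ⊗ₜ[R] u K' e)
              = MvPolynomial.monomial K' c ⊗ₜ[R] u K' e := by
            rw [TensorProduct.smul_tmul', MvPolynomial.smul_monomial, smul_eq_mul, mul_one]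
          rw [zero_add, smul_comm, h1]
        · rw [if_neg hJ, if_neg hJ, zero_smul]


lemma casimir_zero (u : (Fin d →₀ ℕ) → E →ₗ[R] E) : casimir R d E u 0 = 0 := by
  have h : ∀ I, (0 : ℕ) ≤ degOf d I → theta R d E u I (0 : MvPolynomial (Fin d) R ⊗[R] E) = 0 :=
    fun I _ => map_zero _
  rw [casimir_eq_sum R d E u h]
  refine Finset.sum_eq_zero fun I _ => ?_
  rw [map_zero, map_zero, smul_zero]

lemma casimir_eq_kbar_eps (u : (Fin d →₀ ℕ) → E →ₗ[R] E)
    (hnil : ∀ e : E, ∃ N : ℕ, ∀ I : Fin d →₀ ℕ, N ≤ degOf d I → u I e = 0)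
    (z : MvPolynomial (Fin d) R ⊗[R] E) :
    casimir R d E u z = kbar R d E u (eps R d E z) := by
  induction z using TensorProduct.induction_on with
  | zero => rw [casimir_zero, map_zero, kbar_zero]
  | add x y hx hy =>
    rw [casimir_add R d E u hnil, map_add, kbar_add R d E u hnil, hx, hy]
  | tmul p e =>
    induction p using MvPolynomial.induction_on' with
    | monomial J c =>
      rw [casimir_tmul_monomial R d E u hnil, eps_tmul_monomial]
      by_cases hJ : J = 0
      · rw [if_pos hJ, if_pos hJ, kbar_smul R d E u hnil]
      · rw [if_neg hJ, if_neg hJ, kbar_zero]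
    | add p q hp hq =>
      rw [TensorProduct.add_tmul, casimir_add R d E u hnil, map_add,
        kbar_add R d E u hnil, hp, hq]

set_option maxHeartbeats 1000000 in
lemma theta_kbar (u : (Fin d →₀ ℕ) → E →ₗ[R] E)
    (humul : ∀ I J : Fin d →₀ ℕ, u I ∘ₗ u J = multiBinom d (I + J) I • u (I + J))
    (hnil : ∀ e : E, ∃ N : ℕ, ∀ I : Fin d →₀ ℕ, N ≤ degOf d I → u I e = 0)
    {J : Fin d →₀ ℕ} (hJ : J ≠ 0) (e : E) :
    theta R d E u J (kbar R d E u e) = 0 := by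
  obtain ⟨Ne, hNe⟩ := hnil e
  have humul' : ∀ (K I : Fin d →₀ ℕ) (x : E),
      u K (u I x) = (multiBinom d (K + I) K : ℕ) • u (K + I) x := by
    intro K I x
    have := congrArg (fun f : E →ₗ[R] E => f x) (humul K I)
    simpa using this
  set h : (Fin d →₀ ℕ) × (Fin d →₀ ℕ) → (Fin d →₀ ℕ) → MvPolynomial (Fin d) R ⊗[R] E :=
    fun p I =>
      ((-1 : R) ^ degOf d I * (multiBinom d I p.1 : R) * (multiBinom d (p.2 + I) p.2 : R)) •
        (MvPolynomial.monomial (I - p.1) (1 : R) ⊗ₜ[R] u (p.2 + I) e) with hhdef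
  have hA : ∀ I ∈ cut d Ne,
      theta R d E u J (((-1 : R) ^ degOf d I) • (MvPolynomial.monomial I (1 : R) ⊗ₜ[R] u I e))
        = ∑ p ∈ Finset.HasAntidiagonal.antidiagonal J, h p I := by
    intro I _
    rw [map_smul, theta_tmul, Finset.smul_sum]
    refine Finset.sum_congr rfl fun p _ => ?_
    rw [humul' p.2 I e, ← Nat.cast_smul_eq_nsmul R, TensorProduct.tmul_smul,
      smul_smul, smul_smul]
  rw [kbar_eq_sum R d E u hNe, map_sum, Finset.sum_congr rfl hA, Finset.sum_comm]
  have hB : ∀ p ∈ Finset.HasAntidiagonal.antidiagonal J, ∑ I ∈ cut d Ne, h p I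
      = ((-1 : R) ^ degOf d p.1 * (multiBinom d J p.1 : R)) •
          ∑ B ∈ cut d Ne, ((-1 : R) ^ degOf d B * (multiBinom d (J + B) B : R)) •
            (MvPolynomial.monomial B (1 : R) ⊗ₜ[R] u (J + B) e) := by
    intro p hp
    rw [Finset.HasAntidiagonal.mem_antidiagonal] at hp
    have hvan : ∀ I, I ∉ cut d Ne → h p I = 0 := by
      intro I hI
      have hle : Ne ≤ degOf d (p.2 + I) :=
        le_trans (le_of_lt (lt_degOf_of_not_mem_cut d hI))
          (degOf_mono d (self_le_add_left I p.2))
      rw [hhdef]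
      dsimp only
      rw [hNe _ hle, TensorProduct.tmul_zero, smul_zero]
    have hstep1 : ∑ I ∈ cut d Ne, h p I = ∑ᶠ I, h p I := by
      refine (finsum_eq_sum_of_support_subset _ fun I hI => ?_).symm
      rw [Function.mem_support] at hI
      by_contra hc
      exact hI (hvan I hc)
    have h0 : ∀ I, ¬ p.1 ≤ I → h p I = 0 := by
      intro I hle
      rw [hhdef]
      dsimp only
      rw [multiBinom_eq_zero d hle, Nat.cast_zero, mul_zero, zero_mul, zero_smul]
    rw [hstep1, finsum_shift d p.1 (h p) h0]
    have hvan2 : ∀ B, B ∉ cut d Ne → h p (p.1 + B) = 0 := by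
      intro B hB
      have hle : Ne ≤ degOf d (p.2 + (p.1 + B)) := by
        refine le_trans (le_of_lt (lt_degOf_of_not_mem_cut d hB)) ?_
        refine degOf_mono d ?_
        intro k
        simp only [Finsupp.add_apply]
        omega
      rw [hhdef]
      dsimp only
      rw [hNe _ hle, TensorProduct.tmul_zero, smul_zero]
    rw [finsum_eq_sum_of_support_subset _ (s := cut d Ne) fun B hB => by
      rw [Function.mem_support] at hB
      by_contra hc
      exact hB (hvan2 B hc)]
    rw [Finset.smul_sum]
    refine Finset.sum_congr rfl fun B _ => ?_
    rw [hhdef]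
    dsimp only
    rw [add_tsub_cancel_left]
    have hidx : p.2 + (p.1 + B) = J + B := by
      rw [← add_assoc, add_comm p.2 p.1, hp]
    rw [hidx]
    have hbin : (multiBinom d (p.1 + B) p.1 : R) * (multiBinom d (J + B) p.2 : R)
        = (multiBinom d (J + B) B : R) * (multiBinom d J p.1 : R) := by
      have h2 := multi_trinom d (K := p.1) (K' := p.2) B
      rw [hp] at h2
      exact_mod_cast congrArg (Nat.cast : ℕ → R) h2
    rw [smul_smul, degOf_add, pow_add, mul_assoc ((-1 : R) ^ degOf d p.1 * (-1 : R) ^ degOf d B)]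
    rw [hbin]
    congr 1
    ring
  rw [Finset.sum_congr rfl hB, ← Finset.sum_smul,
    sum_antidiagonal_fst d J (fun K => (-1 : R) ^ degOf d K * (multiBinom d J K : R)),
    alt_sum R d J, if_neg hJ, zero_smul]


set_option maxHeartbeats 1000000 in
lemma hasse_kbar (u : (Fin d →₀ ℕ) → E →ₗ[R] E)
    (humul : ∀ I J : Fin d →₀ ℕ, u I ∘ₗ u J = multiBinom d (I + J) I • u (I + J))
    (hnil : ∀ e : E, ∃ N : ℕ, ∀ I : Fin d →₀ ℕ, N ≤ degOf d I → u I e = 0)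
    (I : Fin d →₀ ℕ) (e : E) :
    TensorProduct.map (hasseDeriv R d I) LinearMap.id (kbar R d E u e)
      = ((-1 : R) ^ degOf d I) • kbar R d E u (u I e) := by
  obtain ⟨Ne, hNe⟩ := hnil e
  have humul' : ∀ (K L : Fin d →₀ ℕ) (x : E),
      u K (u L x) = (multiBinom d (K + L) K : ℕ) • u (K + L) x := by
    intro K L x
    have := congrArg (fun f : E →ₗ[R] E => f x) (humul K L)
    simpa using this
  set h : (Fin d →₀ ℕ) → MvPolynomial (Fin d) R ⊗[R] E := fun J =>
    ((-1 : R) ^ degOf d J * (multiBinom d J I : R)) •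
      (MvPolynomial.monomial (J - I) (1 : R) ⊗ₜ[R] u J e) with hhdef
  have hA : ∀ J ∈ cut d Ne,
      TensorProduct.map (hasseDeriv R d I) LinearMap.id
        (((-1 : R) ^ degOf d J) • (MvPolynomial.monomial J (1 : R) ⊗ₜ[R] u J e)) = h J := by
    intro J _
    rw [map_smul, TensorProduct.map_tmul, hasseDeriv_monomial_one, LinearMap.id_apply,
      ← TensorProduct.smul_tmul', smul_smul]
  rw [kbar_eq_sum R d E u hNe, map_sum, Finset.sum_congr rfl hA]
  have hvan : ∀ J, J ∉ cut d Ne → h J = 0 := by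
    intro J hJ
    rw [hhdef]
    dsimp only
    rw [hNe _ (le_of_lt (lt_degOf_of_not_mem_cut d hJ)), TensorProduct.tmul_zero, smul_zero]
  have h0 : ∀ J, ¬ I ≤ J → h J = 0 := by
    intro J hle
    rw [hhdef]
    dsimp only
    rw [multiBinom_eq_zero d hle, Nat.cast_zero, mul_zero, zero_smul]
  have hvan2 : ∀ B, B ∉ cut d Ne → h (I + B) = 0 := by
    intro B hB
    have hle : Ne ≤ degOf d (I + B) :=
      le_trans (le_of_lt (lt_degOf_of_not_mem_cut d hB))
        (degOf_mono d (self_le_add_left B I))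
    rw [hhdef]
    dsimp only
    rw [hNe _ hle, TensorProduct.tmul_zero, smul_zero]
  rw [show ∑ J ∈ cut d Ne, h J = ∑ᶠ J, h J from
      (finsum_eq_sum_of_support_subset _ fun J hJ => by
        rw [Function.mem_support] at hJ
        by_contra hc
        exact hJ (hvan J hc)).symm,
    finsum_shift d I h h0,
    finsum_eq_sum_of_support_subset _ (s := cut d Ne) (fun B hB => by
      rw [Function.mem_support] at hB
      by_contra hc
      exact hB (hvan2 B hc))]
  have hbnd2 : ∀ B, Ne ≤ degOf d B → u B (u I e) = 0 := by
    intro B hB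
    rw [humul' B I e,
      hNe (B + I) (le_trans hB (degOf_mono d (self_le_add_right B I))), smul_zero]
  rw [kbar_eq_sum R d E u hbnd2, Finset.smul_sum]
  refine Finset.sum_congr rfl fun B _ => ?_
  rw [hhdef]
  dsimp only
  rw [add_tsub_cancel_left, humul' B I e, ← Nat.cast_smul_eq_nsmul R,
    TensorProduct.tmul_smul, smul_smul, smul_smul, add_comm B I,
    degOf_add, pow_add, multiBinom_symm d I B]

lemma casimir_fixed (u : (Fin d →₀ ℕ) → E →ₗ[R] E) (hu0 : u 0 = LinearMap.id)
    (z : MvPolynomial (Fin d) R ⊗[R] E)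
    (hz : ∀ I : Fin d →₀ ℕ, I ≠ 0 → theta R d E u I z = 0) :
    casimir R d E u z = z := by
  rw [casimir, finsum_eq_single _ 0 (fun I hI => by rw [hz I hI, map_zero, smul_zero])]
  rw [degOf_zero, pow_zero, one_smul, theta_zero_eq R d E u hu0, LinearMap.id_apply]
  have hmon : (MvPolynomial.monomial (0 : Fin d →₀ ℕ)) (1 : R) = 1 := by
    rw [MvPolynomial.monomial_zero', map_one]
  rw [hmon, LinearMap.mulLeft_one, TensorProduct.map_id, LinearMap.id_apply]

lemma casimir_one_tmul (u : (Fin d →₀ ℕ) → E →ₗ[R] E)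
    (hnil : ∀ e : E, ∃ N : ℕ, ∀ I : Fin d →₀ ℕ, N ≤ degOf d I → u I e = 0) (e : E) :
    casimir R d E u ((1 : MvPolynomial (Fin d) R) ⊗ₜ[R] e) = kbar R d E u e := by
  rw [casimir_eq_kbar_eps R d E u hnil, eps_tmul, map_one, one_smul]

/-- Properties of the Casimir operator `κ` for a locally nilpotent divided-power module
structure `(u_I)` on `E`:  `κ` is `R`-linear, `κ ∘ κ = κ`, `im κ = ⋂_{I ≠ 0} ker θ_I`,
`κ̄ : e ↦ κ(1 ⊗ e)` is an isomorphism of `E` onto `⋂_{I ≠ 0} ker θ_I`, and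
`(D_I ⊗ id) ∘ κ̄ = (−1)^{|I|} · κ̄ ∘ u_I`. -/
theorem casimir_isIdempotent_range_eq_and_bijective
    (u : (Fin d →₀ ℕ) → E →ₗ[R] E)
    (hu0 : u 0 = LinearMap.id)
    (humul : ∀ I J : Fin d →₀ ℕ, u I ∘ₗ u J = multiBinom d (I + J) I • u (I + J))
    (hnil : ∀ e : E, ∃ N : ℕ, ∀ I : Fin d →₀ ℕ, N ≤ degOf d I → u I e = 0) :
    (∀ z w, casimir R d E u (z + w) = casimir R d E u z + casimir R d E u w) ∧
    (∀ (r : R) (z), casimir R d E u (r • z) = r • casimir R d E u z) ∧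
    (∀ z, casimir R d E u (casimir R d E u z) = casimir R d E u z) ∧
    (Set.range (casimir R d E u)
      = {z | ∀ I : Fin d →₀ ℕ, I ≠ 0 → theta R d E u I z = 0}) ∧
    Function.Injective
      (fun e : E => casimir R d E u ((1 : MvPolynomial (Fin d) R) ⊗ₜ[R] e)) ∧
    (∀ e : E, ∀ I : Fin d →₀ ℕ, I ≠ 0 →
      theta R d E u I (casimir R d E u ((1 : MvPolynomial (Fin d) R) ⊗ₜ[R] e)) = 0) ∧
    (∀ z, (∀ I : Fin d →₀ ℕ, I ≠ 0 → theta R d E u I z = 0) →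
      ∃ e : E, casimir R d E u ((1 : MvPolynomial (Fin d) R) ⊗ₜ[R] e) = z) ∧
    (∀ (I : Fin d →₀ ℕ) (e : E),
      TensorProduct.map (hasseDeriv R d I) LinearMap.id
          (casimir R d E u ((1 : MvPolynomial (Fin d) R) ⊗ₜ[R] e))
        = ((-1 : R) ^ degOf d I) •
            casimir R d E u ((1 : MvPolynomial (Fin d) R) ⊗ₜ[R] (u I e))) := by
  refine ⟨casimir_add R d E u hnil, casimir_smul R d E u hnil, ?_, ?_, ?_, ?_, ?_, ?_⟩
  · intro z
    rw [casimir_eq_kbar_eps R d E u hnil z, casimir_eq_kbar_eps R d E u hnil,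
      eps_kbar R d E u hu0 hnil]
  · ext z
    simp only [Set.mem_range, Set.mem_setOf_eq]
    constructor
    · rintro ⟨w, rfl⟩ I hI
      rw [casimir_eq_kbar_eps R d E u hnil]
      exact theta_kbar R d E u humul hnil hI _
    · intro hz
      exact ⟨z, casimir_fixed R d E u hu0 z hz⟩
  · intro e1 e2 hee
    dsimp only at hee
    rw [casimir_one_tmul R d E u hnil, casimir_one_tmul R d E u hnil] at hee
    have h2 := congrArg (eps R d E) hee
    rwa [eps_kbar R d E u hu0 hnil, eps_kbar R d E u hu0 hnil] at h2
  · intro e I hI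
    rw [casimir_one_tmul R d E u hnil]
    exact theta_kbar R d E u humul hnil hI _
  · intro z hz
    refine ⟨eps R d E z, ?_⟩
    rw [casimir_one_tmul R d E u hnil, ← casimir_eq_kbar_eps R d E u hnil z,
      casimir_fixed R d E u hu0 z hz]
  · intro I e
    rw [casimir_one_tmul R d E u hnil, casimir_one_tmul R d E u hnil,
      hasse_kbar R d E u humul hnil I e]


end CasimirStmt
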